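/- For each integer i, we have x_{i+1} t_{n-1,i+1} + u_{i-1} t_{n-1,i-1} = (x_i + u_i) t_{n-1,i}. -/

import Mathlib

/- Setting: a semifield `K` (commutative associative addition `add`, multiplicative
abelian group, distributivity), with `u, x : ℤ → K` being `n`-periodic families. -/

variable {K : Type*} [CommGroup K]

/-- The nonempty sum `f 0 + f 1 + ⋯ + f r` with respect to the binary operation `add`. -/
def addSum (add : K → K → K) (f : ℕ → K) : ℕ → K
  | 0 => f 0
  | r + 1 => add (addSum add f r) (f (r + 1))

lemma addSum_congr (add : K → K → K) (f g : ℕ → K) (r : ℕ) (h : ∀ k ≤ r, f k = g k) :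
    addSum add f r = addSum add g r := by
  induction r with
  | zero => exact h 0 le_rfl
  | succ r ih =>
    simp only [addSum]
    rw [ih (fun k hk => h k (hk.trans (Nat.le_succ r))), h (r+1) le_rfl]

lemma addSum_mul (add : K → K → K)
    (hdistrib : ∀ a b c : K, a * add b c = add (a * b) (a * c))
    (c : K) (f : ℕ → K) (r : ℕ) :
    addSum add (fun k => c * f k) r = c * addSum add f r := by
  induction r with
  | zero => rfl
  | succ r ih => simp only [addSum, ih, hdistrib]

lemma addSum_front (add : K → K → K)
    (hadd_assoc : ∀ a b c : K, add (add a b) c = add a (add b c))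
    (f : ℕ → K) (r : ℕ) :
    addSum add f (r+1) = add (f 0) (addSum add (fun k => f (k+1)) r) := by
  induction r with
  | zero => rfl
  | succ r ih => simp only [addSum] at *; rw [ih, hadd_assoc]

lemma prod_shift' (f : ℤ → K) (j : ℤ) (a b : ℕ) :
    ∏ i ∈ Finset.Icc (a+1) (b+1), f (j + i) = ∏ i ∈ Finset.Icc a b, f (j + 1 + i) := by
  rw [← Finset.Ico_add_one_right_eq_Icc, ← Finset.Ico_add_one_right_eq_Icc, Finset.prod_Ico_eq_prod_range,
    Finset.prod_Ico_eq_prod_range]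
  have : b + 1 + 1 - (a + 1) = b + 1 - a := by omega
  rw [this]
  refine Finset.prod_congr rfl fun k _ => ?_
  congr 1
  push_cast
  ring

lemma prod_shift (f : ℤ → K) (j : ℤ) (k : ℕ) :
    ∏ i ∈ Finset.Icc 1 (k+1), f (j + i) = f (j + 1) * ∏ i ∈ Finset.Icc 1 k, f (j + 1 + i) := by
  have h0 : (0:ℕ) + 1 = 1 := rfl
  rw [← h0, prod_shift' f j 0 k]
  have e1 : Finset.Icc 0 k = Finset.range (k+1) := by
    rw [← Finset.Ico_add_one_right_eq_Icc, Finset.range_eq_Ico]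
  have e2 : Finset.Icc (0+1) k = Finset.Ico 1 (k+1) := by rw [← Finset.Ico_add_one_right_eq_Icc]
  rw [e1, e2, Finset.prod_range_succ', Finset.prod_Ico_eq_prod_range, mul_comm]
  simp only [Nat.add_sub_cancel, Nat.cast_zero, add_zero, Nat.cast_add, Nat.cast_one]
  congr 1
  refine Finset.prod_congr rfl fun m _ => ?_
  congr 1
  push_cast
  ring


/-- The element `t_{r,j} = Σ_{k=0}^{r} (∏_{i=1}^{k} x_{j+i}) · (∏_{i=k+1}^{r} u_{j+i})`. -/
def tpoly (add : K → K → K) (u x : ℤ → K) (r : ℕ) (j : ℤ) : K :=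
  addSum add
    (fun k => (∏ i ∈ Finset.Icc 1 k, x (j + i)) * ∏ i ∈ Finset.Icc (k + 1) r, u (j + i)) r

lemma tpoly_back (add : K → K → K)
    (hdistrib : ∀ a b c : K, a * add b c = add (a * b) (a * c))
    (u x : ℤ → K) (r : ℕ) (j : ℤ) :
    tpoly add u x (r+1) j =
      add (u (j + (r+1 : ℕ)) * tpoly add u x r j) (∏ i ∈ Finset.Icc 1 (r+1), x (j + i)) := by
  unfold tpoly
  show add (addSum add _ r) _ = _
  have h1 : addSum add
      (fun k => (∏ i ∈ Finset.Icc 1 k, x (j + i)) * ∏ i ∈ Finset.Icc (k + 1) (r+1), u (j + i)) r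
      = addSum add
      (fun k => u (j + (r+1 : ℕ)) *
        ((∏ i ∈ Finset.Icc 1 k, x (j + i)) * ∏ i ∈ Finset.Icc (k + 1) r, u (j + i))) r := by
    refine addSum_congr add _ _ r fun k hk => ?_
    rw [Finset.prod_Icc_succ_top (by omega)]
    simp [mul_comm, mul_left_comm, mul_assoc]
  rw [h1, addSum_mul add hdistrib]
  congr 1
  simp [Finset.Icc_eq_empty_of_lt]

lemma tpoly_front (add : K → K → K)
    (hadd_assoc : ∀ a b c : K, add (add a b) c = add a (add b c))
    (hdistrib : ∀ a b c : K, a * add b c = add (a * b) (a * c))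
    (u x : ℤ → K) (r : ℕ) (j : ℤ) :
    tpoly add u x (r+1) j =
      add (∏ i ∈ Finset.Icc 1 (r+1), u (j + i)) (x (j + 1) * tpoly add u x r (j + 1)) := by
  unfold tpoly
  rw [addSum_front add hadd_assoc]
  congr 1
  · simp
  · have h1 : addSum add
        (fun k => (∏ i ∈ Finset.Icc 1 (k+1), x (j + i)) *
          ∏ i ∈ Finset.Icc (k + 1 + 1) (r+1), u (j + i)) r
        = addSum add
        (fun k => x (j + 1) *
          ((∏ i ∈ Finset.Icc 1 k, x (j + 1 + i)) * ∏ i ∈ Finset.Icc (k + 1) r, u (j + 1 + i))) r := by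
      refine addSum_congr add _ _ r fun k hk => ?_
      rw [prod_shift, prod_shift' u j (k+1) r, mul_assoc]
    rw [h1, addSum_mul add hdistrib]

/-- Lemma (f): `x_{i+1} t_{n-1,i+1} + u_{i-1} t_{n-1,i-1} = (x_i + u_i) t_{n-1,i}`. -/
theorem tpoly_threeterm (n : ℕ) (hn : 0 < n) (add : K → K → K)
    (hadd_assoc : ∀ a b c : K, add (add a b) c = add a (add b c))
    (hadd_comm : ∀ a b : K, add a b = add b a)
    (hdistrib : ∀ a b c : K, a * add b c = add (a * b) (a * c))
    (u x : ℤ → K) (hu : ∀ i : ℤ, u (i + n) = u i) (hx : ∀ i : ℤ, x (i + n) = x i)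
    (i : ℤ) :
    add (x (i + 1) * tpoly add u x (n - 1) (i + 1)) (u (i - 1) * tpoly add u x (n - 1) (i - 1)) =
      add (x i) (u i) * tpoly add u x (n - 1) i := by
  have hadd_left_comm : ∀ a b c : K, add a (add b c) = add b (add a c) := by
    intro a b c
    rw [← hadd_assoc, hadd_comm a b, hadd_assoc]
  match n, hn with
  | 1, _ =>
    have h1 : tpoly add u x 0 = fun j => 1 := by
      funext j; simp [tpoly, addSum]
    have hx1 : x (i + 1) = x i := by have := hx i; simpa using this
    have hu1 : u (i - 1) = u i := by have := hu (i - 1); simpa using this.symm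
    simp [h1, hx1, hu1]
  | (m + 2), _ =>
    have hnn : (m + 2) - 1 = m + 1 := rfl
    rw [hnn]
    -- periodicity facts
    have hu1 : u (i + 1 + ((m+1 : ℕ) : ℤ)) = u i := by
      rw [show i + 1 + ((m+1 : ℕ) : ℤ) = i + ((m+2 : ℕ) : ℤ) by push_cast; ring]
      exact hu i
    have hu2 : u (i + ((m+1 : ℕ) : ℤ)) = u (i - 1) := by
      rw [show i + ((m+1 : ℕ) : ℤ) = (i - 1) + ((m+2 : ℕ) : ℤ) by push_cast; ring]
      exact hu (i - 1)
    have hx2 : x (i + ((m+2 : ℕ) : ℤ)) = x i := hx i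
    have hu3 : u (i - 1 + ((m+2 : ℕ) : ℤ)) = u (i - 1) := hu (i - 1)
    have h1 : x (i + 1) * tpoly add u x (m+1) (i + 1) =
        add (u i * (x (i + 1) * tpoly add u x m (i + 1)))
          (x i * ∏ k ∈ Finset.Icc 1 (m+1), x (i + k)) := by
      rw [tpoly_back add hdistrib u x m (i+1), hdistrib]
      congr 1
      · rw [hu1]; simp [mul_comm, mul_left_comm]
      · have hs := prod_shift x i (m+1)
        rw [Finset.prod_Icc_succ_top (by omega), hx2] at hs
        rw [← hs, mul_comm]
    have h2 : u (i - 1) * tpoly add u x (m+1) (i - 1) =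
        add (u i * ∏ k ∈ Finset.Icc 1 (m+1), u (i + k))
          (u (i - 1) * (x i * tpoly add u x m i)) := by
      rw [tpoly_front add hadd_assoc hdistrib u x m (i-1), hdistrib]
      congr 1
      · have hs := prod_shift u (i-1) (m+1)
        rw [Finset.prod_Icc_succ_top (by omega), hu3] at hs
        rw [show i - 1 + 1 = i by ring] at hs
        rw [← hs, mul_comm]
      · rw [show i - 1 + 1 = i by ring]
    have h3 : x i * tpoly add u x (m+1) i =
        add (u (i - 1) * (x i * tpoly add u x m i))
          (x i * ∏ k ∈ Finset.Icc 1 (m+1), x (i + k)) := by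
      rw [tpoly_back add hdistrib u x m i, hdistrib, hu2, mul_left_comm]
    have h4 : u i * tpoly add u x (m+1) i =
        add (u i * ∏ k ∈ Finset.Icc 1 (m+1), u (i + k))
          (u i * (x (i + 1) * tpoly add u x m (i + 1))) := by
      rw [tpoly_front add hadd_assoc hdistrib u x m i, hdistrib]
    rw [h1, h2, mul_comm (add (x i) (u i)), hdistrib,
      mul_comm _ (x i), mul_comm _ (u i), h3, h4]
    simp only [hadd_assoc]
    have key : ∀ a b c d : K, add a (add b (add c d)) = add d (add b (add c a)) := by
      intro a b c d
      rw [hadd_left_comm a b, hadd_left_comm a c, hadd_comm a d, hadd_left_comm c d,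
        hadd_left_comm b d]
    exact key _ _ _ _
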